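/- Let S and A be measurable spaces, R : S × A → ℝ a bounded measurable reward, φ : S → ℝ a bounded measurable potential, and γ a real number with 0 ≤ γ < 1. Let Π be a nonempty set (of policies) and for each π ∈ Π let μ(π) be a probability measure on the trajectory space (ℕ → S × A). Define J(π) = ∫ ∑_{t=0}^{∞} γ^t · R(τ(t)) dμ(π)(τ) and J'(π) = ∫ ∑_{t=0}^{∞} γ^t · (R(τ(t)) + γ·φ(state of τ(t+1)) − φ(state of τ(t))) dμ(π)(τ). Assume all measures μ(π) have the same initial-state marginal, i.e., the pushforward of μ(π) under the map τ ↦ (first component of τ(0)) is a fixed probability measure ρ₀ on S, independent of π. Then for every π* ∈ Π, π* maximizes J' over Π if and only if π* maximizes J over Π. -/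

import Mathlib

open MeasureTheory Filter

theorem uniform_advice_preserves_optimal_policies
    {S A : Type*} [MeasurableSpace S] [MeasurableSpace A]
    {P : Type*} [Nonempty P]
    (μ : P → Measure (ℕ → S × A)) [∀ p, IsProbabilityMeasure (μ p)]
    (R : S × A → ℝ) (hRm : Measurable R) (CR : ℝ) (hRb : ∀ x, |R x| ≤ CR)
    (φ : S → ℝ) (hφm : Measurable φ) (Cφ : ℝ) (hφb : ∀ x, |φ x| ≤ Cφ)
    (γ : ℝ) (hγ0 : 0 ≤ γ) (hγ1 : γ < 1)
    (ρ₀ : Measure S) [IsProbabilityMeasure ρ₀]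
    (hρ : ∀ p, (μ p).map (fun τ => (τ 0).1) = ρ₀)
    (J J' : P → ℝ)
    (hJ : ∀ p, J p = ∫ τ, (∑' t : ℕ, γ ^ t * R (τ t)) ∂(μ p))
    (hJ' : ∀ p, J' p
        = ∫ τ, (∑' t : ℕ, γ ^ t * (R (τ t) + (γ * φ (τ (t + 1)).1 - φ (τ t).1))) ∂(μ p))
    (πstar : P) :
    (∀ p, J' p ≤ J' πstar) ↔ (∀ p, J p ≤ J πstar) := by
  -- rule out the degenerate empty case
  rcases isEmpty_or_nonempty (S × A) with hemp | hne
  · exfalso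
    obtain ⟨p⟩ := ‹Nonempty P›
    have hie : IsEmpty (ℕ → S × A) := ⟨fun f => hemp.false (f 0)⟩
    have h1 : (μ p) Set.univ = 1 := measure_univ
    rw [(μ p).eq_zero_of_isEmpty] at h1
    simp at h1
  have hCR : (0:ℝ) ≤ CR := le_trans (abs_nonneg _) (hRb hne.some)
  have hCφ : (0:ℝ) ≤ Cφ := le_trans (abs_nonneg _) (hφb hne.some.1)
  have hgeo : Summable (fun t : ℕ => γ ^ t) := summable_geometric_of_lt_one hγ0 hγ1
  have hbnd : ∀ (ψ : S × A → ℝ) (C : ℝ), (∀ x, |ψ x| ≤ C) →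
      ∀ (τ : ℕ → S × A) (t : ℕ), ‖γ ^ t * ψ (τ t)‖ ≤ C * γ ^ t := by
    intro ψ C hC τ t
    have hγt : (0:ℝ) ≤ γ ^ t := pow_nonneg hγ0 t
    rw [Real.norm_eq_abs, abs_mul, abs_of_nonneg hγt]
    calc γ ^ t * |ψ (τ t)| ≤ γ ^ t * C := mul_le_mul_of_nonneg_left (hC _) hγt
      _ = C * γ ^ t := mul_comm _ _
  -- summability of the reward series
  have hsumR : ∀ τ : ℕ → S × A, Summable (fun t : ℕ => γ ^ t * R (τ t)) := fun τ =>
    Summable.of_norm_bounded (hgeo.mul_left CR) (hbnd R CR hRb τ)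
  -- pointwise identity
  have key : ∀ τ : ℕ → S × A,
      (∑' t : ℕ, γ ^ t * (R (τ t) + (γ * φ (τ (t + 1)).1 - φ (τ t).1)))
        = (∑' t : ℕ, γ ^ t * R (τ t)) - φ (τ 0).1 := by
    intro τ
    set a : ℕ → ℝ := fun t => γ ^ t * φ (τ t).1 with ha
    have habs : ∀ t, |a t| ≤ Cφ * γ ^ t := fun t => hbnd (fun x => φ x.1) Cφ (fun x => hφb x.1) τ t
    have hsuma : Summable a :=
      Summable.of_norm_bounded (hgeo.mul_left Cφ) habs
    have hsuma' : Summable (fun t => a (t + 1)) := (summable_nat_add_iff 1).2 hsuma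
    have hΔ : Summable (fun t => a (t + 1) - a t) := hsuma'.sub hsuma
    have ha0 : Tendsto a atTop (nhds 0) := by
      have h1 : Tendsto (fun t : ℕ => Cφ * γ ^ t) atTop (nhds 0) := by
        simpa using (tendsto_pow_atTop_nhds_zero_of_lt_one hγ0 hγ1).const_mul Cφ
      have h2 : Tendsto (fun t : ℕ => -(Cφ * γ ^ t)) atTop (nhds 0) := by
        simpa using h1.neg
      exact tendsto_of_tendsto_of_tendsto_of_le_of_le h2 h1
        (fun t => neg_le_of_abs_le (habs t)) (fun t => le_of_abs_le (habs t))
    have htele : (∑' t : ℕ, (a (t + 1) - a t)) = -a 0 := by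
      have h1 : Tendsto (fun n => ∑ i ∈ Finset.range n, (a (i + 1) - a i))
          atTop (nhds (∑' t : ℕ, (a (t + 1) - a t))) := hΔ.hasSum.tendsto_sum_nat
      have h2 : Tendsto (fun n => ∑ i ∈ Finset.range n, (a (i + 1) - a i))
          atTop (nhds (-a 0)) := by
        have heq : (fun n => ∑ i ∈ Finset.range n, (a (i + 1) - a i))
            = fun n => a n - a 0 := funext fun n => Finset.sum_range_sub a n
        rw [heq]
        simpa using ha0.sub_const (a 0)
      exact tendsto_nhds_unique h1 h2
    have hptw : (fun t : ℕ => γ ^ t * (R (τ t) + (γ * φ (τ (t + 1)).1 - φ (τ t).1)))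
        = fun t => γ ^ t * R (τ t) + (a (t + 1) - a t) := by
      funext t
      simp only [ha, pow_succ]
      ring
    rw [hptw, Summable.tsum_add (hsumR τ) hΔ, htele]
    simp [ha, sub_eq_add_neg]
  -- measurability and integrability
  have hτt : ∀ t : ℕ, Measurable (fun τ : ℕ → S × A => τ t) := fun t =>
    measurable_pi_apply t
  have hFm : Measurable (fun τ : ℕ → S × A => ∑' t : ℕ, γ ^ t * R (τ t)) := by
    apply measurable_of_tendsto_metrizable
      (f := fun n (τ : ℕ → S × A) => ∑ t ∈ Finset.range n, γ ^ t * R (τ t))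
    · intro n
      exact Finset.measurable_sum _ fun t _ => (hRm.comp (hτt t)).const_mul _
    · rw [tendsto_pi_nhds]
      intro τ
      exact (hsumR τ).hasSum.tendsto_sum_nat
  have hFb : ∀ τ : ℕ → S × A, ‖∑' t : ℕ, γ ^ t * R (τ t)‖ ≤ CR / (1 - γ) := by
    intro τ
    calc ‖∑' t : ℕ, γ ^ t * R (τ t)‖
        ≤ ∑' t : ℕ, CR * γ ^ t :=
          tsum_of_norm_bounded (hgeo.mul_left CR).hasSum (hbnd R CR hRb τ)
      _ = CR * (1 - γ)⁻¹ := by rw [tsum_mul_left, tsum_geometric_of_lt_one hγ0 hγ1]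
      _ = CR / (1 - γ) := by rw [div_eq_mul_inv]
  have hFint : ∀ p, Integrable (fun τ : ℕ → S × A => ∑' t : ℕ, γ ^ t * R (τ t)) (μ p) :=
    fun p => ⟨hFm.aestronglyMeasurable,
      HasFiniteIntegral.of_bounded (C := CR / (1 - γ)) (ae_of_all _ hFb)⟩
  have hGm : Measurable (fun τ : ℕ → S × A => φ (τ 0).1) :=
    hφm.comp (measurable_fst.comp (hτt 0))
  have hGint : ∀ p, Integrable (fun τ : ℕ → S × A => φ (τ 0).1) (μ p) :=
    fun p => ⟨hGm.aestronglyMeasurable,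
      HasFiniteIntegral.of_bounded (C := Cφ) (ae_of_all _ fun τ => hφb _)⟩
  -- the initial-state integral is policy-independent
  have hG : ∀ p, (∫ τ, φ (τ 0).1 ∂(μ p)) = ∫ s, φ s ∂ρ₀ := by
    intro p
    have hm0 : Measurable fun τ : ℕ → S × A => (τ 0).1 := (hτt 0).fst
    rw [← hρ p, integral_map hm0.aemeasurable hφm.aestronglyMeasurable]
  -- J' p = J p - const
  have hshift : ∀ p, J' p = J p - ∫ s, φ s ∂ρ₀ := by
    intro p
    rw [hJ' p, hJ p, ← hG p]
    calc (∫ τ, (∑' t : ℕ, γ ^ t * (R (τ t) + (γ * φ (τ (t + 1)).1 - φ (τ t).1))) ∂(μ p))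
        = ∫ τ, ((∑' t : ℕ, γ ^ t * R (τ t)) - φ (τ 0).1) ∂(μ p) := by
          exact integral_congr_ae (ae_of_all _ key)
      _ = (∫ τ, (∑' t : ℕ, γ ^ t * R (τ t)) ∂(μ p)) - ∫ τ, φ (τ 0).1 ∂(μ p) :=
          integral_sub (hFint p) (hGint p)
  constructor
  · intro h p
    have := h p
    rw [hshift p, hshift πstar] at this
    linarith
  · intro h p
    rw [hshift p, hshift πstar]
    linarith [h p]
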